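/- Let s ≥ 1, m ≥ 0, and n = 8s + 4 + 2m ≥ 12. Define vectors in F₄ⁿ: for i = 1,…,2s+1 let rᵢ have entry 1 in coordinates 4(i−1)+1,…,4i and 0 elsewhere, and let r_{2s+2} consist of the block D = (0,1,ω,ω²) repeated 2s+1 times followed by 2m entries equal to 1. Let C be the F₄-span of r₁,…,r_{2s+2}. Then: (i) dim_{F₄} C = 2s+2 and the minimum Hamming weight of C is 4; (ii) the trace radical R = C ∩ C^{⊥t} equals the F₄-span of r₁,…,r_{2s+1}, so dim_{F₂} R = 4s+2; and (iii) every element of C \ R (there are 3·4^{2s+1} of them) has Hamming weight exactly n − 2s − 1. (Hence C normalizes an [[n, 1, n−2s−1; n−4s−3]] EAQECC saturating the EA-Singleton bound.) -/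

import Mathlib

noncomputable section

abbrev F2 : Type := ZMod 2
abbrev F4 : Type := GaloisField 2 2

/-- The trace inner product `(u, v)ₜ = Σⱼ (uⱼ vⱼ² + uⱼ² vⱼ)` on `F₄ⁿ`. -/
def trInner {n : ℕ} (u v : Fin n → F4) : F4 :=
  ∑ j, (u j * (v j) ^ 2 + (u j) ^ 2 * v j)

/-- The Hamming weight of `u ∈ F₄ⁿ`: the number of nonzero coordinates. -/
def wt {n : ℕ} (u : Fin n → F4) : ℕ := Set.ncard {i | u i ≠ 0}

/-- The trace dual `C^{⊥t} = {u ∈ F₄ⁿ | ∀ v ∈ C, (u, v)ₜ = 0}` of a set `C ⊆ F₄ⁿ`,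
as an `F₂`-subspace of `F₄ⁿ`. -/
def trDualSub {n : ℕ} (C : Set (Fin n → F4)) : Submodule F2 (Fin n → F4) where
  carrier := {u | ∀ v ∈ C, trInner u v = 0}
  zero_mem' := by intro v hv; simp [trInner]
  add_mem' := by
    intro a b ha hb v hv
    have h : trInner (a + b) v = trInner a v + trInner b v := by
      simp only [trInner, Pi.add_apply]
      rw [← Finset.sum_add_distrib]
      refine Finset.sum_congr rfl ?_
      intro j _
      have h2 : (2 : F4) = 0 := CharTwo.two_eq_zero
      linear_combination (a j * b j * v j) * h2
    rw [h, ha v hv, hb v hv, add_zero]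
  smul_mem' := by
    intro c a ha v hv
    have hc : (algebraMap F2 F4 c) ^ 2 = algebraMap F2 F4 c := by
      have h2 : c ^ 2 = c := by revert c; decide
      rw [← map_pow, h2]
    have h : trInner (c • a) v = algebraMap F2 F4 c * trInner a v := by
      simp only [trInner, Pi.smul_apply, Algebra.smul_def, Finset.mul_sum]
      refine Finset.sum_congr rfl ?_
      intro j _
      rw [mul_pow, hc]; ring
    rw [h, ha v hv, mul_zero]

attribute [local instance 10] Classical.propDecidable

local instance : Fintype F4 := Fintype.ofFinite F4

/-- The `D` block entry. -/
def Dval (ω : F4) (k : ℕ) : F4 :=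
  if k = 0 then 0 else if k = 1 then 1 else if k = 2 then ω else ω^2

lemma F4card : Fintype.card F4 = 4 := by
  have := GaloisField.card 2 2 (by norm_num)
  rwa [Nat.card_eq_fintype_card] at this

lemma F4cases (ω : F4) (hω : ω ^ 2 + ω + 1 = 0) :
    ∀ x : F4, x = 0 ∨ x = 1 ∨ x = ω ∨ x = ω^2 := by
  have h2 : (2:F4) = 0 := CharTwo.two_eq_zero
  have h10 : (1:F4) ≠ 0 := one_ne_zero
  have hω0 : ω ≠ 0 := by intro h; rw [h] at hω; simp at hω
  have hω1 : ω ≠ 1 := by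
    intro h; rw [h] at hω; apply h10; linear_combination hω - h2
  have hω20 : ω^2 ≠ 0 := pow_ne_zero 2 hω0
  have hω21 : ω^2 ≠ 1 := by
    intro h; apply hω0; linear_combination hω - h - h2
  have hω2ω : ω^2 ≠ ω := by
    intro h; apply h10; linear_combination hω - h - ω * h2
  intro x
  have huniv : ({0, 1, ω, ω^2} : Finset F4) = Finset.univ := by
    apply Finset.eq_univ_of_card
    rw [F4card]
    rw [Finset.card_insert_of_notMem (by simp [h10.symm, hω0.symm, hω20.symm]),
        Finset.card_insert_of_notMem (by simp [hω1.symm, hω21.symm]),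
        Finset.card_insert_of_notMem (by simp [hω2ω.symm]), Finset.card_singleton]
  have : x ∈ ({0, 1, ω, ω^2} : Finset F4) := huniv ▸ Finset.mem_univ x
  simpa using this

lemma blockTr (ω : F4) (hω : ω ^ 2 + ω + 1 = 0) (p q b b' : F4) :
    ((p + b*Dval ω 0)*(q + b'*Dval ω 0)^2 + (p + b*Dval ω 0)^2*(q + b'*Dval ω 0))
  + ((p + b*Dval ω 1)*(q + b'*Dval ω 1)^2 + (p + b*Dval ω 1)^2*(q + b'*Dval ω 1))
  + ((p + b*Dval ω 2)*(q + b'*Dval ω 2)^2 + (p + b*Dval ω 2)^2*(q + b'*Dval ω 2))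
  + ((p + b*Dval ω 3)*(q + b'*Dval ω 3)^2 + (p + b*Dval ω 3)^2*(q + b'*Dval ω 3))
  = b*b'^2 + b^2*b' := by
  have h2 : (2:F4) = 0 := CharTwo.two_eq_zero
  simp only [Dval]
  norm_num
  linear_combination ((p*b'^2+q*b^2)*(ω^2-ω+1) + (p^2*b'+q^2*b)
    + (b*b'^2+b^2*b')*(ω-1)*(ω^3+2) + 2*(p*q*b'+p*q*b)
    + 2*(q*b*b'+p*b*b')*(ω^2-ω+1)) * hω
    + (2*(p*q^2+p^2*q) + (b*b'^2+b^2*b')) * h2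

lemma blockWt (ω : F4) (hω : ω ^ 2 + ω + 1 = 0) (a b : F4) (hb : b ≠ 0) :
    ((if a + b * Dval ω 0 ≠ 0 then 1 else 0) + (if a + b * Dval ω 1 ≠ 0 then 1 else 0)
   + (if a + b * Dval ω 2 ≠ 0 then 1 else 0) + (if a + b * Dval ω 3 ≠ 0 then 1 else 0) : ℕ)
    = 3 := by
  have h2 : (2:F4) = 0 := CharTwo.two_eq_zero
  have hω0 : ω ≠ 0 := by intro h; rw [h] at hω; simp at hω
  have hω20 : ω^2 ≠ 0 := pow_ne_zero 2 hω0
  rcases F4cases ω hω (a * b⁻¹) with h|h|h|h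
  · have ha : a = 0 := by field_simp at h; linear_combination h
    rw [ha]; simp only [Dval]; norm_num [hb, hω0]
  · have ha : a = b := by field_simp at h; linear_combination h
    have k1 : b + b = 0 := by linear_combination b * h2
    have k2 : b + b * ω ≠ 0 := fun h => mul_ne_zero hb hω20 (by linear_combination b * hω - h)
    have k3 : b + b * ω^2 ≠ 0 := fun h => mul_ne_zero hb hω0 (by linear_combination b * hω - h)
    rw [ha]; simp only [Dval]; norm_num [hb, hω0, hω20, k1, k2, k3]
  · have ha : a = b * ω := by field_simp at h; linear_combination h
    have k1 : b * ω + b = 0 → False :=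
      fun h => mul_ne_zero hb hω20 (by linear_combination b * hω - h)
    have k2 : b * ω + b * ω = 0 := by linear_combination b * ω * h2
    have k3 : b * ω + b * ω^2 ≠ 0 := fun h => hb (by linear_combination b * hω - h)
    rw [ha]; simp only [Dval]; norm_num [hb, hω0, hω20, k1, k2, k3]
    rw [if_neg k1]
  · have ha : a = b * ω^2 := by field_simp at h; linear_combination h
    have k1 : b * ω^2 + b = 0 → False :=
      fun h => mul_ne_zero hb hω0 (by linear_combination b * hω - h)
    have k2 : b * ω^2 + b * ω ≠ 0 := fun h => hb (by linear_combination b * hω - h)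
    have k3 : b * ω^2 + b * ω^2 = 0 := by linear_combination b * ω^2 * h2
    rw [ha]; simp only [Dval]; norm_num [hb, hω0, hω20, k1, k2, k3]
    rw [if_neg k1]

lemma sum_blocks {M : Type*} [AddCommMonoid M] (f : ℕ → M) (N : ℕ) :
    ∑ j ∈ Finset.range (4 * N), f j
      = ∑ i ∈ Finset.range N, (f (4*i) + f (4*i+1) + f (4*i+2) + f (4*i+3)) := by
  induction N with
  | zero => simp
  | succ k ih =>
    have h4 : 4 * (k+1) = 4*k+1+1+1+1 := by ring
    rw [h4, Finset.sum_range_succ, Finset.sum_range_succ, Finset.sum_range_succ,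
      Finset.sum_range_succ, ih, Finset.sum_range_succ]
    abel

lemma wt_eq_sum {n : ℕ} (u : Fin n → F4) :
    wt u = ∑ i : Fin n, (if u i ≠ 0 then 1 else 0) := by
  classical
  have h1 : {i | u i ≠ 0} = ↑(Finset.univ.filter (fun i => u i ≠ 0)) := by ext i; simp
  rw [wt, h1, Set.ncard_coe_finset, Finset.card_filter]

/-- The coefficient-to-coordinate function. -/
def Vf (s : ℕ) (ω : F4) (c : Fin (2 * s + 2) → F4) (j : ℕ) : F4 :=
  if j < 8 * s + 4 then
    c ⟨min (j / 4) (2 * s + 1), by omega⟩ + c ⟨2 * s + 1, by omega⟩ * Dval ω (j % 4)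
  else c ⟨2 * s + 1, by omega⟩

lemma coordFormula (s m n : ℕ) (hn : n = 8 * s + 4 + 2 * m) (ω : F4)
    (r : Fin (2 * s + 2) → Fin n → F4)
    (hr : ∀ i : Fin (2 * s + 2), (i : ℕ) < 2 * s + 1 →
      r i = fun j : Fin n => if (j : ℕ) / 4 = (i : ℕ) then 1 else 0)
    (hrlast : ∀ i : Fin (2 * s + 2), (i : ℕ) = 2 * s + 1 →
      r i = fun j : Fin n => if (j : ℕ) < 8 * s + 4 then
        (if (j : ℕ) % 4 = 0 then 0 else if (j : ℕ) % 4 = 1 then 1 else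
         if (j : ℕ) % 4 = 2 then ω else ω ^ 2)
        else 1)
    (c : Fin (2 * s + 2) → F4) (j : Fin n) :
    (∑ i, c i • r i) j = Vf s ω c (j : ℕ) := by
  simp only [Finset.sum_apply, Pi.smul_apply, smul_eq_mul]
  have step : ∀ i : Fin (2 * s + 2), c i * r i j =
      (if (i : ℕ) < 2 * s + 1 then (if (j : ℕ) / 4 = (i : ℕ) then c i else 0)
       else c i * (if (j : ℕ) < 8 * s + 4 then Dval ω ((j : ℕ) % 4) else 1)) := by
    intro i
    by_cases hi : (i : ℕ) < 2 * s + 1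
    · rw [hr i hi, if_pos hi]
      simp only
      by_cases hji : (j : ℕ) / 4 = (i : ℕ)
      · rw [if_pos hji, if_pos hji, mul_one]
      · rw [if_neg hji, if_neg hji, mul_zero]
    · rw [hrlast i (by have := i.isLt; omega), if_neg hi]
      simp only [Dval]
  rw [Finset.sum_congr rfl (fun i _ => step i), Fin.sum_univ_castSucc (n := 2 * s + 1)]
  have redcast : ∀ i : Fin (2 * s + 1),
      (if ((i.castSucc : Fin (2*s+2)) : ℕ) < 2 * s + 1 then
        (if (j : ℕ) / 4 = ((i.castSucc : Fin (2*s+2)) : ℕ) then c i.castSucc else 0)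
       else c i.castSucc * (if (j : ℕ) < 8 * s + 4 then Dval ω ((j : ℕ) % 4) else 1))
      = (if (j : ℕ) / 4 = (i : ℕ) then c i.castSucc else 0) := by
    intro i
    rw [if_pos (by simp [i.isLt])]
    simp only [Fin.coe_castSucc]
  have hlt : (if ((Fin.last (2*s+1) : Fin (2*s+2)) : ℕ) < 2 * s + 1 then
        (if (j : ℕ) / 4 = ((Fin.last (2*s+1) : Fin (2*s+2)) : ℕ) then c (Fin.last (2*s+1)) else 0)
       else c (Fin.last (2*s+1)) * (if (j : ℕ) < 8 * s + 4 then Dval ω ((j : ℕ) % 4) else 1))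
      = c ⟨2 * s + 1, by omega⟩ * (if (j : ℕ) < 8 * s + 4 then Dval ω ((j : ℕ) % 4) else 1) := by
    rw [if_neg (by simp)]
    congr 1
  rw [Finset.sum_congr rfl (fun i _ => redcast i), hlt]
  by_cases hj : (j : ℕ) < 8 * s + 4
  · rw [Finset.sum_eq_single (⟨(j : ℕ) / 4, by omega⟩ : Fin (2 * s + 1))]
    · rw [if_pos rfl]
      simp only [Vf]
      rw [if_pos hj, if_pos hj]
      congr 2
      apply Fin.ext
      simp only [Fin.coe_castSucc]
      omega
    · intro b _ hbne
      rw [if_neg]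
      intro hjb
      exact hbne (Fin.ext hjb.symm)
    · intro hmem
      exact absurd (Finset.mem_univ _) hmem
  · rw [Finset.sum_eq_zero, zero_add]
    · simp only [Vf]
      rw [if_neg hj, if_neg hj, mul_one]
    · intro i _
      rw [if_neg]
      have := i.isLt
      omega

lemma Vf_block (s : ℕ) (ω : F4) (c : Fin (2 * s + 2) → F4) (i k : ℕ)
    (hi : i < 2 * s + 1) (hk : k < 4) :
    Vf s ω c (4 * i + k) = c ⟨i, by omega⟩ + c ⟨2 * s + 1, by omega⟩ * Dval ω k := by
  have e1 : (4 * i + k) / 4 = i := by omega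
  have e2 : (4 * i + k) % 4 = k := by omega
  simp only [Vf, if_pos (show 4 * i + k < 8 * s + 4 by omega), e1, e2]
  congr 2
  apply Fin.ext
  simp only
  omega

lemma Vf_tail (s : ℕ) (ω : F4) (c : Fin (2 * s + 2) → F4) (j : ℕ) (hj : ¬ (j < 8 * s + 4)) :
    Vf s ω c j = c ⟨2 * s + 1, by omega⟩ := by
  simp only [Vf, if_neg hj]

lemma trFormula (s m n : ℕ) (hn : n = 8 * s + 4 + 2 * m)
    (ω : F4) (hω : ω ^ 2 + ω + 1 = 0)
    (r : Fin (2 * s + 2) → Fin n → F4)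
    (hr : ∀ i : Fin (2 * s + 2), (i : ℕ) < 2 * s + 1 →
      r i = fun j : Fin n => if (j : ℕ) / 4 = (i : ℕ) then 1 else 0)
    (hrlast : ∀ i : Fin (2 * s + 2), (i : ℕ) = 2 * s + 1 →
      r i = fun j : Fin n => if (j : ℕ) < 8 * s + 4 then
        (if (j : ℕ) % 4 = 0 then 0 else if (j : ℕ) % 4 = 1 then 1 else
         if (j : ℕ) % 4 = 2 then ω else ω ^ 2)
        else 1)
    (c d : Fin (2 * s + 2) → F4) :
    trInner (∑ i, c i • r i) (∑ i, d i • r i)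
      = c ⟨2 * s + 1, by omega⟩ * (d ⟨2 * s + 1, by omega⟩) ^ 2
        + (c ⟨2 * s + 1, by omega⟩) ^ 2 * d ⟨2 * s + 1, by omega⟩ := by
  have h2 : (2:F4) = 0 := CharTwo.two_eq_zero
  have hcoord := coordFormula s m n hn ω r hr hrlast
  rw [trInner]
  have step : ∀ j : Fin n,
      ((∑ i, c i • r i) j * ((∑ i, d i • r i) j) ^ 2
        + ((∑ i, c i • r i) j) ^ 2 * ((∑ i, d i • r i) j))
      = (fun t : ℕ => Vf s ω c t * (Vf s ω d t) ^ 2 + (Vf s ω c t) ^ 2 * Vf s ω d t) ((j : ℕ)) :=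
    fun j => by rw [hcoord c j, hcoord d j]
  rw [Finset.sum_congr rfl (fun j _ => step j),
    Fin.sum_univ_eq_sum_range (fun t : ℕ => Vf s ω c t * (Vf s ω d t) ^ 2 + (Vf s ω c t) ^ 2 * Vf s ω d t) n,
    show n = 4 * (2 * s + 1) + 2 * m by omega, Finset.sum_range_add, sum_blocks]
  have hblock : ∀ i ∈ Finset.range (2 * s + 1),
      ((Vf s ω c (4*i) * (Vf s ω d (4*i)) ^ 2 + (Vf s ω c (4*i)) ^ 2 * Vf s ω d (4*i))
      + (Vf s ω c (4*i+1) * (Vf s ω d (4*i+1)) ^ 2 + (Vf s ω c (4*i+1)) ^ 2 * Vf s ω d (4*i+1))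
      + (Vf s ω c (4*i+2) * (Vf s ω d (4*i+2)) ^ 2 + (Vf s ω c (4*i+2)) ^ 2 * Vf s ω d (4*i+2))
      + (Vf s ω c (4*i+3) * (Vf s ω d (4*i+3)) ^ 2 + (Vf s ω c (4*i+3)) ^ 2 * Vf s ω d (4*i+3)))
      = c ⟨2 * s + 1, by omega⟩ * (d ⟨2 * s + 1, by omega⟩) ^ 2
        + (c ⟨2 * s + 1, by omega⟩) ^ 2 * d ⟨2 * s + 1, by omega⟩ := by
    intro i hi
    rw [Finset.mem_range] at hi
    rw [show (4*i : ℕ) = 4*i+0 by ring]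
    rw [Vf_block s ω c i 0 hi (by norm_num), Vf_block s ω d i 0 hi (by norm_num),
      Vf_block s ω c i 1 hi (by norm_num), Vf_block s ω d i 1 hi (by norm_num),
      Vf_block s ω c i 2 hi (by norm_num), Vf_block s ω d i 2 hi (by norm_num),
      Vf_block s ω c i 3 hi (by norm_num), Vf_block s ω d i 3 hi (by norm_num)]
    exact blockTr ω hω (c ⟨i, by omega⟩) (d ⟨i, by omega⟩) _ _
  have htail : ∀ x ∈ Finset.range (2 * m),
      ((fun t : ℕ => Vf s ω c t * (Vf s ω d t) ^ 2 + (Vf s ω c t) ^ 2 * Vf s ω d t) (4 * (2*s+1) + x))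
      = c ⟨2 * s + 1, by omega⟩ * (d ⟨2 * s + 1, by omega⟩) ^ 2
        + (c ⟨2 * s + 1, by omega⟩) ^ 2 * d ⟨2 * s + 1, by omega⟩ := by
    intro x _
    simp only
    rw [Vf_tail s ω c _ (by omega), Vf_tail s ω d _ (by omega)]
  rw [Finset.sum_congr rfl hblock, Finset.sum_congr rfl htail,
    Finset.sum_const, Finset.sum_const, Finset.card_range, Finset.card_range,
    nsmul_eq_mul, nsmul_eq_mul]
  push_cast
  linear_combination ((s : F4) + (m : F4)) * (c ⟨2 * s + 1, by omega⟩ * (d ⟨2 * s + 1, by omega⟩) ^ 2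
        + (c ⟨2 * s + 1, by omega⟩) ^ 2 * d ⟨2 * s + 1, by omega⟩) * h2

lemma wtFormulaB (s m n : ℕ) (hn : n = 8 * s + 4 + 2 * m)
    (ω : F4) (hω : ω ^ 2 + ω + 1 = 0)
    (r : Fin (2 * s + 2) → Fin n → F4)
    (hr : ∀ i : Fin (2 * s + 2), (i : ℕ) < 2 * s + 1 →
      r i = fun j : Fin n => if (j : ℕ) / 4 = (i : ℕ) then 1 else 0)
    (hrlast : ∀ i : Fin (2 * s + 2), (i : ℕ) = 2 * s + 1 →
      r i = fun j : Fin n => if (j : ℕ) < 8 * s + 4 then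
        (if (j : ℕ) % 4 = 0 then 0 else if (j : ℕ) % 4 = 1 then 1 else
         if (j : ℕ) % 4 = 2 then ω else ω ^ 2)
        else 1)
    (c : Fin (2 * s + 2) → F4) (hb : c ⟨2 * s + 1, by omega⟩ ≠ 0) :
    wt (∑ i, c i • r i) = 3 * (2 * s + 1) + 2 * m := by
  have hcoord := coordFormula s m n hn ω r hr hrlast
  rw [wt_eq_sum]
  have step : ∀ j : Fin n, (if (∑ i, c i • r i) j ≠ 0 then 1 else 0)
      = (fun t : ℕ => if Vf s ω c t ≠ 0 then 1 else 0) ((j : ℕ)) :=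
    fun j => by simp only [hcoord c j]
  rw [Finset.sum_congr rfl (fun j _ => step j),
    Fin.sum_univ_eq_sum_range (fun t : ℕ => if Vf s ω c t ≠ 0 then 1 else 0) n,
    show n = 4 * (2 * s + 1) + 2 * m by omega, Finset.sum_range_add, sum_blocks]
  have hblock : ∀ i ∈ Finset.range (2 * s + 1),
      ((if Vf s ω c (4*i) ≠ 0 then 1 else 0) + (if Vf s ω c (4*i+1) ≠ 0 then 1 else 0)
       + (if Vf s ω c (4*i+2) ≠ 0 then 1 else 0) + (if Vf s ω c (4*i+3) ≠ 0 then 1 else 0) : ℕ)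
      = 3 := by
    intro i hi
    rw [Finset.mem_range] at hi
    rw [show (4*i : ℕ) = 4*i+0 by ring]
    rw [Vf_block s ω c i 0 hi (by norm_num), Vf_block s ω c i 1 hi (by norm_num),
      Vf_block s ω c i 2 hi (by norm_num), Vf_block s ω c i 3 hi (by norm_num)]
    exact blockWt ω hω (c ⟨i, by omega⟩) _ hb
  have htail : ∀ x ∈ Finset.range (2 * m),
      ((fun t : ℕ => if Vf s ω c t ≠ 0 then 1 else 0) (4 * (2*s+1) + x) : ℕ) = 1 := by
    intro x _
    simp only
    rw [Vf_tail s ω c _ (by omega), if_pos hb]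
  rw [Finset.sum_congr rfl hblock, Finset.sum_congr rfl htail,
    Finset.sum_const, Finset.sum_const, Finset.card_range, Finset.card_range,
    smul_eq_mul, smul_eq_mul]
  omega

lemma wtFormula0 (s m n : ℕ) (hn : n = 8 * s + 4 + 2 * m)
    (ω : F4) (hω : ω ^ 2 + ω + 1 = 0)
    (r : Fin (2 * s + 2) → Fin n → F4)
    (hr : ∀ i : Fin (2 * s + 2), (i : ℕ) < 2 * s + 1 →
      r i = fun j : Fin n => if (j : ℕ) / 4 = (i : ℕ) then 1 else 0)
    (hrlast : ∀ i : Fin (2 * s + 2), (i : ℕ) = 2 * s + 1 →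
      r i = fun j : Fin n => if (j : ℕ) < 8 * s + 4 then
        (if (j : ℕ) % 4 = 0 then 0 else if (j : ℕ) % 4 = 1 then 1 else
         if (j : ℕ) % 4 = 2 then ω else ω ^ 2)
        else 1)
    (c : Fin (2 * s + 2) → F4) (hb : c ⟨2 * s + 1, by omega⟩ = 0) :
    wt (∑ i, c i • r i)
      = ∑ i ∈ Finset.range (2 * s + 1), (if c ⟨min i (2 * s + 1), by omega⟩ ≠ 0 then 4 else 0) := by
  have hcoord := coordFormula s m n hn ω r hr hrlast
  rw [wt_eq_sum]
  have step : ∀ j : Fin n, (if (∑ i, c i • r i) j ≠ 0 then 1 else 0)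
      = (fun t : ℕ => if Vf s ω c t ≠ 0 then 1 else 0) ((j : ℕ)) :=
    fun j => by simp only [hcoord c j]
  rw [Finset.sum_congr rfl (fun j _ => step j),
    Fin.sum_univ_eq_sum_range (fun t : ℕ => if Vf s ω c t ≠ 0 then 1 else 0) n,
    show n = 4 * (2 * s + 1) + 2 * m by omega, Finset.sum_range_add, sum_blocks]
  have hblock : ∀ i ∈ Finset.range (2 * s + 1),
      ((if Vf s ω c (4*i) ≠ 0 then 1 else 0) + (if Vf s ω c (4*i+1) ≠ 0 then 1 else 0)
       + (if Vf s ω c (4*i+2) ≠ 0 then 1 else 0) + (if Vf s ω c (4*i+3) ≠ 0 then 1 else 0) : ℕ)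
      = (if c ⟨min i (2 * s + 1), by omega⟩ ≠ 0 then 4 else 0) := by
    intro i hi
    rw [Finset.mem_range] at hi
    rw [show (4*i : ℕ) = 4*i+0 by ring]
    rw [Vf_block s ω c i 0 hi (by norm_num), Vf_block s ω c i 1 hi (by norm_num),
      Vf_block s ω c i 2 hi (by norm_num), Vf_block s ω c i 3 hi (by norm_num), hb]
    have hmk : (⟨min i (2 * s + 1), by omega⟩ : Fin (2 * s + 2)) = ⟨i, by omega⟩ := by
      apply Fin.ext; simp only; omega
    rw [hmk]
    by_cases h : c ⟨i, by omega⟩ ≠ 0 <;> simp [h]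
  have htail : ∀ x ∈ Finset.range (2 * m),
      ((fun t : ℕ => if Vf s ω c t ≠ 0 then 1 else 0) (4 * (2*s+1) + x) : ℕ) = 0 := by
    intro x _
    simp only
    rw [Vf_tail s ω c _ (by omega), hb]
    simp
  rw [Finset.sum_congr rfl hblock, Finset.sum_congr rfl htail, Finset.sum_const,
    Finset.card_range, smul_eq_mul, Nat.mul_zero, Nat.add_zero]

lemma rIndep (s m n : ℕ) (hn : n = 8 * s + 4 + 2 * m) (ω : F4)
    (r : Fin (2 * s + 2) → Fin n → F4)
    (hr : ∀ i : Fin (2 * s + 2), (i : ℕ) < 2 * s + 1 →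
      r i = fun j : Fin n => if (j : ℕ) / 4 = (i : ℕ) then 1 else 0)
    (hrlast : ∀ i : Fin (2 * s + 2), (i : ℕ) = 2 * s + 1 →
      r i = fun j : Fin n => if (j : ℕ) < 8 * s + 4 then
        (if (j : ℕ) % 4 = 0 then 0 else if (j : ℕ) % 4 = 1 then 1 else
         if (j : ℕ) % 4 = 2 then ω else ω ^ 2)
        else 1)
    : LinearIndependent F4 r := by
  rw [Fintype.linearIndependent_iff]
  intro g hg
  have hcoord := coordFormula s m n hn ω r hr hrlast
  have heval : ∀ (jv : ℕ) (h : jv < n), Vf s ω g jv = 0 := by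
    intro jv h
    rw [← hcoord g ⟨jv, h⟩, hg]
    simp
  have hblock0 : ∀ (i0 : Fin (2 * s + 2)), (i0 : ℕ) < 2 * s + 1 → ∀ k, k < 4 →
      g i0 + g ⟨2 * s + 1, by omega⟩ * Dval ω k = 0 := by
    intro i0 hi0 k hk
    have h1 := Vf_block s ω g (i0 : ℕ) k hi0 hk
    have h2 := heval (4 * (i0 : ℕ) + k) (by omega)
    have h3 : (⟨(i0 : ℕ), by omega⟩ : Fin (2 * s + 2)) = i0 := by apply Fin.ext; rfl
    rw [h1, h3] at h2
    exact h2
  have hsmall : ∀ (i0 : Fin (2 * s + 2)), (i0 : ℕ) < 2 * s + 1 → g i0 = 0 := by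
    intro i0 hi0
    have := hblock0 i0 hi0 0 (by norm_num)
    simpa [Dval] using this
  have hlast : g ⟨2 * s + 1, by omega⟩ = 0 := by
    have h0 : g 0 = 0 := hsmall 0 (by rw [Fin.val_zero]; omega)
    have h1 := hblock0 0 (by rw [Fin.val_zero]; omega) 1 (by norm_num)
    simp only [Dval] at h1
    norm_num at h1
    linear_combination h1 - h0
  intro i
  by_cases hi : (i : ℕ) < 2 * s + 1
  · exact hsmall i hi
  · have : i = ⟨2 * s + 1, by omega⟩ := by apply Fin.ext; simp only; have := i.isLt; omega
    rw [this]
    exact hlast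

lemma memW (s m n : ℕ) (hn : n = 8 * s + 4 + 2 * m) (ω : F4)
    (r : Fin (2 * s + 2) → Fin n → F4)
    (hr : ∀ i : Fin (2 * s + 2), (i : ℕ) < 2 * s + 1 →
      r i = fun j : Fin n => if (j : ℕ) / 4 = (i : ℕ) then 1 else 0)
    (hrlast : ∀ i : Fin (2 * s + 2), (i : ℕ) = 2 * s + 1 →
      r i = fun j : Fin n => if (j : ℕ) < 8 * s + 4 then
        (if (j : ℕ) % 4 = 0 then 0 else if (j : ℕ) % 4 = 1 then 1 else
         if (j : ℕ) % 4 = 2 then ω else ω ^ 2)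
        else 1)
    (v : Fin n → F4) :
    v ∈ Submodule.span F4 (r '' {i | (i : ℕ) < 2 * s + 1}) ↔
      ∃ c : Fin (2 * s + 2) → F4, c ⟨2 * s + 1, by omega⟩ = 0 ∧ ∑ i, c i • r i = v := by
  have hrange : r '' {i : Fin (2 * s + 2) | (i : ℕ) < 2 * s + 1}
      = Set.range (fun i : Fin (2 * s + 1) => r i.castSucc) := by
    ext x
    constructor
    · rintro ⟨i, hi, rfl⟩
      exact ⟨⟨(i : ℕ), hi⟩, congrArg r (by apply Fin.ext; simp)⟩
    · rintro ⟨i, rfl⟩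
      exact ⟨i.castSucc, by simpa using i.isLt, rfl⟩
  rw [hrange, Submodule.mem_span_range_iff_exists_fun]
  constructor
  · rintro ⟨c', rfl⟩
    refine ⟨fun i => if h : (i : ℕ) < 2 * s + 1 then c' ⟨(i : ℕ), h⟩ else 0, by simp, ?_⟩
    rw [Fin.sum_univ_castSucc (n := 2 * s + 1)]
    have e : ∀ i : Fin (2 * s + 1),
        (if h : ((i.castSucc : Fin (2 * s + 2)) : ℕ) < 2 * s + 1
          then c' ⟨((i.castSucc : Fin (2 * s + 2)) : ℕ), h⟩ else 0) • r i.castSucc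
        = c' i • r i.castSucc := by
      intro i
      rw [dif_pos (by simpa using i.isLt)]
      congr 1
    have elast : (if h : ((Fin.last (2 * s + 1) : Fin (2 * s + 2)) : ℕ) < 2 * s + 1
          then c' ⟨((Fin.last (2 * s + 1) : Fin (2 * s + 2)) : ℕ), h⟩ else 0)
          • r (Fin.last (2 * s + 1)) = 0 := by
      rw [dif_neg (by simp), zero_smul]
    rw [Finset.sum_congr rfl (fun i _ => e i), elast, add_zero]
  · rintro ⟨c, hc0, rfl⟩
    refine ⟨fun i => c i.castSucc, Eq.symm ?_⟩
    rw [Fin.sum_univ_castSucc (n := 2 * s + 1)]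
    have hl : c (Fin.last (2 * s + 1)) • r (Fin.last (2 * s + 1)) = 0 := by
      rw [show c (Fin.last (2 * s + 1)) = 0 from hc0, zero_smul]
    rw [hl, add_zero]

lemma imageEqRange (s n : ℕ) (r : Fin (2 * s + 2) → Fin n → F4) :
    r '' {i : Fin (2 * s + 2) | (i : ℕ) < 2 * s + 1}
      = Set.range (fun i : Fin (2 * s + 1) => r i.castSucc) := by
  ext x
  constructor
  · rintro ⟨i, hi, rfl⟩
    exact ⟨⟨(i : ℕ), hi⟩, congrArg r (by apply Fin.ext; simp)⟩
  · rintro ⟨i, rfl⟩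
    exact ⟨i.castSucc, by simpa using i.isLt, rfl⟩

/-- for `s ≥ 1` and `n = 8s + 4 + 2m`, the `F₄`-linear code `C` spanned by the
`2s + 1` disjoint block rows `rᵢ = (0,…,0,1,1,1,1,0,…,0)` together with the row
`(D, D, …, D, 1, …, 1)` where `D = (0, 1, ω, ω²)` is repeated `2s + 1` times, has
`dim_{F₄} C = 2s + 2` and minimum weight 4, its trace radical `R = C ∩ C^{⊥t}` is the
`F₄`-span of the first `2s + 1` rows (so `dim_{F₂} R = 4s + 2`), and all `3·4^{2s+1}`
elements of `C \ R` have Hamming weight exactly `n - 2s - 1`. -/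
theorem stmt12 (s m n : ℕ) (hs : 1 ≤ s) (hn : n = 8 * s + 4 + 2 * m)
    (ω : F4) (hω : ω ^ 2 + ω + 1 = 0)
    (r : Fin (2 * s + 2) → Fin n → F4)
    (hr : ∀ i : Fin (2 * s + 2), (i : ℕ) < 2 * s + 1 →
      r i = fun j : Fin n => if (j : ℕ) / 4 = (i : ℕ) then 1 else 0)
    (hrlast : ∀ i : Fin (2 * s + 2), (i : ℕ) = 2 * s + 1 →
      r i = fun j : Fin n => if (j : ℕ) < 8 * s + 4 then
        (if (j : ℕ) % 4 = 0 then 0 else if (j : ℕ) % 4 = 1 then 1 else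
         if (j : ℕ) % 4 = 2 then ω else ω ^ 2)
        else 1) :
    let C := Submodule.span F4 (Set.range r)
    let R := C.restrictScalars F2 ⊓ trDualSub (C : Set (Fin n → F4))
    Module.finrank F4 C = 2 * s + 2 ∧
    (∀ v ∈ C, v ≠ 0 → 4 ≤ wt v) ∧ (∃ v ∈ C, v ≠ 0 ∧ wt v = 4) ∧
    R = (Submodule.span F4 (r '' {i | (i : ℕ) < 2 * s + 1})).restrictScalars F2 ∧
    Module.finrank F2 R = 4 * s + 2 ∧
    (∀ v ∈ C, v ∉ R → wt v = n - 2 * s - 1) ∧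
    ((C : Set (Fin n → F4)) \ (R : Set (Fin n → F4))).ncard = 3 * 4 ^ (2 * s + 1) := by
  intro C R
  have h2 : (2:F4) = 0 := CharTwo.two_eq_zero
  have hmem : ∀ v : Fin n → F4, v ∈ C ↔ ∃ c : Fin (2 * s + 2) → F4, ∑ i, c i • r i = v :=
    fun v => Submodule.mem_span_range_iff_exists_fun F4
  have hindep := rIndep s m n hn ω r hr hrlast
  have htr := trFormula s m n hn ω hω r hr hrlast
  have hwtB := wtFormulaB s m n hn ω hω r hr hrlast
  have hwt0 := wtFormula0 s m n hn ω hω r hr hrlast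
  have hW := memW s m n hn ω r hr hrlast
  -- characterization of R
  have hRiff : ∀ v, v ∈ R ↔ v ∈ Submodule.span F4 (r '' {i : Fin (2 * s + 2) | (i : ℕ) < 2 * s + 1}) := by
    intro v
    rw [Submodule.mem_inf, Submodule.restrictScalars_mem, hW v]
    constructor
    · rintro ⟨hvC, hvD⟩
      obtain ⟨c, rfl⟩ := (hmem _).mp hvC
      refine ⟨c, ?_, rfl⟩
      have e1 := hvD _ ((hmem (∑ i, (fun _ : Fin (2 * s + 2) => (1:F4)) i • r i)).mpr
        ⟨(fun _ => (1:F4)), rfl⟩)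
      have e2 := hvD _ ((hmem (∑ i, (fun _ : Fin (2 * s + 2) => ω) i • r i)).mpr
        ⟨(fun _ => ω), rfl⟩)
      rw [htr c (fun _ => (1:F4))] at e1
      rw [htr c (fun _ => ω)] at e2
      linear_combination (c ⟨2 * s + 1, by omega⟩) * hω - e2 - ω * e1
        + (c ⟨2 * s + 1, by omega⟩)^2 * ω * h2
    · rintro ⟨c, hc0, rfl⟩
      refine ⟨(hmem _).mpr ⟨c, rfl⟩, ?_⟩
      intro w hw
      obtain ⟨d, rfl⟩ := (hmem w).mp hw
      rw [htr c d]
      linear_combination ((d ⟨2 * s + 1, by omega⟩)^2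
        + c ⟨2 * s + 1, by omega⟩ * d ⟨2 * s + 1, by omega⟩) * hc0
  have hReq : R = (Submodule.span F4 (r '' {i : Fin (2 * s + 2) | (i : ℕ) < 2 * s + 1})).restrictScalars F2 := by
    apply SetLike.ext
    intro v
    rw [Submodule.restrictScalars_mem]
    exact hRiff v
  -- finrank of C
  have hfr4 : Module.finrank F4 C = 2 * s + 2 := by
    rw [show C = Submodule.span F4 (Set.range r) from rfl, finrank_span_eq_card hindep]
    simp
  -- finrank of R
  have hfrW : Module.finrank F4 (Submodule.span F4 (r '' {i : Fin (2 * s + 2) | (i : ℕ) < 2 * s + 1})) = 2 * s + 1 := by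
    rw [imageEqRange s n r]
    have hcomp := finrank_span_eq_card (R := F4) (hindep.comp Fin.castSucc (Fin.castSucc_injective _))
    rw [Fintype.card_fin] at hcomp
    exact hcomp
  have hfr2 : Module.finrank F2 R = 4 * s + 2 := by
    rw [hReq]
    have eq1 : Module.finrank F2
        ((Submodule.span F4 (r '' {i : Fin (2 * s + 2) | (i : ℕ) < 2 * s + 1})).restrictScalars F2)
        = Module.finrank F2 (Submodule.span F4 (r '' {i : Fin (2 * s + 2) | (i : ℕ) < 2 * s + 1})) :=
      LinearEquiv.finrank_eq ((Submodule.restrictScalarsEquiv F2 F4 (Fin n → F4)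
        (Submodule.span F4 (r '' {i : Fin (2 * s + 2) | (i : ℕ) < 2 * s + 1}))).restrictScalars F2)
    rw [eq1, ← Module.finrank_mul_finrank F2 F4
      (Submodule.span F4 (r '' {i : Fin (2 * s + 2) | (i : ℕ) < 2 * s + 1})), hfrW,
      GaloisField.finrank 2 (by norm_num)]
    omega
  refine ⟨hfr4, ?_, ?_, hReq, hfr2, ?_, ?_⟩
  · -- min weight ≥ 4
    intro v hvC hv0
    obtain ⟨c, rfl⟩ := (hmem v).mp hvC
    by_cases hb : c ⟨2 * s + 1, by omega⟩ = 0
    · rw [hwt0 c hb]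
      have hex : ∃ i : Fin (2 * s + 2), c i ≠ 0 := by
        by_contra hall
        push_neg at hall
        exact hv0 (Finset.sum_eq_zero fun i _ => by rw [hall i, zero_smul])
      obtain ⟨i, hci⟩ := hex
      have hilt : (i : ℕ) < 2 * s + 1 := by
        rcases lt_or_ge (i : ℕ) (2 * s + 1) with h | h
        · exact h
        · exfalso
          have hieq : i = ⟨2 * s + 1, by omega⟩ := by
            apply Fin.ext; have := i.isLt; simp only; omega
          exact hci (hieq ▸ hb)
      have hsub : ({(i : ℕ)} : Finset ℕ) ⊆ Finset.range (2 * s + 1) := by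
        simp [Finset.singleton_subset_iff, Finset.mem_range, hilt]
      refine le_trans ?_ (Finset.sum_le_sum_of_subset hsub)
      rw [Finset.sum_singleton]
      have hkey : (⟨min (i : ℕ) (2 * s + 1), by omega⟩ : Fin (2 * s + 2)) = i := by
        apply Fin.ext
        show min (i : ℕ) (2 * s + 1) = (i : ℕ)
        omega
      rw [if_pos (show c ⟨min (i : ℕ) (2 * s + 1), by omega⟩ ≠ 0 by rw [hkey]; exact hci)]
    · rw [hwtB c hb]; omega
  · -- exists weight-4 word
    refine ⟨r ⟨0, by omega⟩, Submodule.subset_span ⟨⟨0, by omega⟩, rfl⟩, ?_, ?_⟩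
    · intro h0
      have hc := congrFun h0 ⟨0, by omega⟩
      rw [hr ⟨0, by omega⟩ (by show (0:ℕ) < 2 * s + 1; omega)] at hc
      simp at hc
    · have hc0sum : ∑ i : Fin (2 * s + 2),
          (fun i : Fin (2 * s + 2) => if (i : ℕ) = 0 then (1:F4) else 0) i • r i
          = r ⟨0, by omega⟩ := by
        refine (Finset.sum_eq_single (⟨0, by omega⟩ : Fin (2 * s + 2)) ?_ ?_).trans ?_
        · intro b _ hbne
          simp only
          rw [if_neg (fun hb0 => hbne (Fin.ext hb0)), zero_smul]
        · intro hmem'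
          exact absurd (Finset.mem_univ _) hmem'
        · simp
      rw [← hc0sum, hwt0 _ (by simp only; rw [if_neg (by omega)])]
      refine (Finset.sum_eq_single_of_mem 0 (Finset.mem_range.mpr (by omega)) ?_).trans ?_
      · intro t ht htne
        rw [Finset.mem_range] at ht
        simp only
        rw [if_neg]
        simp only [ne_eq, not_not]
        rw [if_neg]
        show ¬ (min t (2 * s + 1) = 0)
        omega
      · simp
  · -- weight of elements outside R
    intro v hvC hvR
    obtain ⟨c, rfl⟩ := (hmem v).mp hvC
    have hb : c ⟨2 * s + 1, by omega⟩ ≠ 0 :=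
      fun hb0 => hvR ((hRiff _).mpr ((hW _).mpr ⟨c, hb0, rfl⟩))
    rw [hwtB c hb]
    omega
  · -- cardinality of C \ R
    have hsub : (R : Set (Fin n → F4)) ⊆ (C : Set (Fin n → F4)) := by
      intro v hv
      have : v ∈ R := hv
      rw [hRiff v] at this
      exact Submodule.span_mono (Set.image_subset_range r _) this
    have hncC : Nat.card C = 4 ^ (2 * s + 2) := by
      letI : Fintype C := Fintype.ofFinite _
      rw [Nat.card_eq_fintype_card, Module.card_eq_pow_finrank (K := F4) (V := C), F4card, hfr4]
    have hncR : Nat.card R = 2 ^ (4 * s + 2) := by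
      letI : Fintype R := Fintype.ofFinite _
      rw [Nat.card_eq_fintype_card, Module.card_eq_pow_finrank (K := F2) (V := R), ZMod.card, hfr2]
    have hcC : (C : Set (Fin n → F4)).ncard = 4 ^ (2 * s + 2) := by
      rw [← Nat.card_coe_set_eq]; exact hncC
    have hcR : (R : Set (Fin n → F4)).ncard = 2 ^ (4 * s + 2) := by
      rw [← Nat.card_coe_set_eq]; exact hncR
    rw [Set.ncard_diff hsub (Set.toFinite _), hcC, hcR]
    have hpow : (2:ℕ) ^ (4 * s + 2) = 4 ^ (2 * s + 1) := by
      rw [show (4:ℕ) = 2 ^ 2 from rfl, ← pow_mul]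
      congr 1
      omega
    rw [hpow, pow_succ (4:ℕ) (2 * s + 1)]
    have hx : 0 < (4:ℕ) ^ (2 * s + 1) := Nat.pow_pos (by norm_num)
    omega
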